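/- arXiv:2503.23703 — 5 statements merged into one kernel-verified Lean document; each statement's English description precedes it below -/
import Mathlib

section
/- Any minimal (with respect to inclusion) tropical solution S ⊆ ℤ≥0 of a tropical linear differential equation P = min_{0≤i≤k}{a_i + u^(i)} has at most two elements. -/
/-- `tval S i` = min { s - i : s ∈ S, s ≥ i }, as an extended real (⊤ if no such s). -/
noncomputable def tval (S : Set ℕ) (i : ℕ) : EReal :=
  ⨅ (d : ℕ) (_ : i + d ∈ S), ((d : ℝ) : EReal)

/-- The term `a_i + val_S(i)` of the tropical linear differential equation. -/
noncomputable def tterm (a : ℕ → ℤ) (S : Set ℕ) (i : ℕ) : EReal :=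
  ((a i : ℝ) : EReal) + tval S i

/-- `min_{0 ≤ i ≤ k} { a_i + val_S(i) }`. -/
noncomputable def tmin (k : ℕ) (a : ℕ → ℤ) (S : Set ℕ) : EReal :=
  ⨅ i ∈ Finset.range (k + 1), tterm a S i

/-- `S` is a tropical solution: the minimum is attained at least twice
(this also covers the case where the minimum is `∞`, since `k ≥ 1`). -/
def IsSol (k : ℕ) (a : ℕ → ℤ) (S : Set ℕ) : Prop :=
  ∃ i ∈ Finset.range (k + 1), ∃ j ∈ Finset.range (k + 1),
    i ≠ j ∧ tterm a S i = tmin k a S ∧ tterm a S j = tmin k a S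

/-- A minimal tropical solution: nonempty, a solution, and no nonempty proper
subset is a solution. -/
def IsMinSol (k : ℕ) (a : ℕ → ℤ) (S : Set ℕ) : Prop :=
  S.Nonempty ∧ IsSol k a S ∧ ∀ T ⊆ S, T.Nonempty → IsSol k a T → T = S

lemma tval_le {S : Set ℕ} {i d : ℕ} (h : i + d ∈ S) : tval S i ≤ ((d : ℝ) : EReal) :=
  iInf_le_of_le d (iInf_le _ h)

lemma tval_mono {S T : Set ℕ} (h : T ⊆ S) (i : ℕ) : tval S i ≤ tval T i :=
  le_iInf₂ fun d hd => tval_le (h hd)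

lemma tterm_mono {a : ℕ → ℤ} {S T : Set ℕ} (h : T ⊆ S) (i : ℕ) :
    tterm a S i ≤ tterm a T i :=
  add_le_add le_rfl (tval_mono h i)

lemma tmin_mono {k : ℕ} {a : ℕ → ℤ} {S T : Set ℕ} (h : T ⊆ S) :
    tmin k a S ≤ tmin k a T :=
  iInf₂_mono fun i _ => tterm_mono h i

lemma tval_exists {S : Set ℕ} {i : ℕ} (h : tval S i ≠ ⊤) : ∃ d, i + d ∈ S := by
  by_contra hc
  push_neg at hc
  exact h (by simp [tval, hc])

lemma tval_eq_find {S : Set ℕ} {i : ℕ} [DecidablePred (· ∈ S)] (hex : ∃ d, i + d ∈ S) :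
    tval S i = ((Nat.find hex : ℝ) : EReal) := by
  refine le_antisymm (tval_le (Nat.find_spec hex)) (le_iInf₂ fun d hd => ?_)
  have : Nat.find hex ≤ d := Nat.find_min' hex hd
  exact_mod_cast this

/-- any minimal tropical solution has at most two elements. -/
theorem stmt0 (k : ℕ) (hk : 1 ≤ k) (a : ℕ → ℤ) (S : Set ℕ)
    (h : IsMinSol k a S) : ∃ p q : ℕ, S ⊆ {p, q} := by
  classical
  obtain ⟨⟨s, hs⟩, ⟨i, hi, j, hj, hij, hti, htj⟩, hmin⟩ := h
  -- the minimum is not ⊤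
  have hmtop : tmin k a S ≠ ⊤ := by
    intro htop
    have h0 : tmin k a S ≤ tterm a S 0 := iInf₂_le 0 (by simp)
    have h1 : tterm a S 0 ≤ ((a 0 : ℝ) : EReal) + ((s : ℝ) : EReal) :=
      add_le_add le_rfl (tval_le (by simpa using hs))
    rw [htop] at h0
    have := top_le_iff.mp (h0.trans h1)
    rw [← EReal.coe_add] at this
    exact EReal.coe_ne_top _ this
  -- tval S i and tval S j are finite
  have hvi : tval S i ≠ ⊤ := by
    intro hv
    apply hmtop
    rw [← hti]
    simp [tterm, hv, EReal.add_top_of_ne_bot]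
  have hvj : tval S j ≠ ⊤ := by
    intro hv
    apply hmtop
    rw [← htj]
    simp [tterm, hv, EReal.add_top_of_ne_bot]
  have hexi := tval_exists hvi
  have hexj := tval_exists hvj
  set di := Nat.find hexi with hdi
  set dj := Nat.find hexj with hdj
  refine ⟨i + di, j + dj, ?_⟩
  set T : Set ℕ := {i + di, j + dj} with hT
  have hTS : T ⊆ S := by
    intro x hx
    rcases hx with hx | hx
    · exact hx ▸ Nat.find_spec hexi
    · exact hx ▸ Nat.find_spec hexj
  have hvTi : tval T i = tval S i := by
    refine le_antisymm ?_ (tval_mono hTS i)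
    rw [tval_eq_find hexi]
    exact tval_le (show i + di ∈ T by left; rfl)
  have hvTj : tval T j = tval S j := by
    refine le_antisymm ?_ (tval_mono hTS j)
    rw [tval_eq_find hexj]
    exact tval_le (show j + dj ∈ T by right; rfl)
  have hti' : tterm a T i = tterm a S i := by rw [tterm, tterm, hvTi]
  have htj' : tterm a T j = tterm a S j := by rw [tterm, tterm, hvTj]
  have hmT : tmin k a T = tmin k a S := by
    refine le_antisymm ?_ (tmin_mono hTS)
    calc tmin k a T ≤ tterm a T i := iInf₂_le i hi
    _ = tmin k a S := by rw [hti', hti]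
  have hsolT : IsSol k a T :=
    ⟨i, hi, j, hj, hij, by rw [hti', hmT, hti], by rw [htj', hmT, htj]⟩
  have := hmin T hTS ⟨i + di, by left; rfl⟩ hsolT
  rw [← this]
end

section
/- If S is a minimal tropical solution of P = min_{0≤i≤k}{a_i + u^(i)} of the form S = {p, q} with p < q, then p < k. -/
/-- if `{p, q}` with `p < q` is a minimal tropical solution, then `p < k`. -/
theorem stmt1 (k : ℕ) (hk : 1 ≤ k) (a : ℕ → ℤ) (p q : ℕ) (hpq : p < q)
    (h : IsMinSol k a {p, q}) : p < k := by
  by_contra hpk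
  push_neg at hpk
  obtain ⟨hne, hsol, hmin⟩ := h
  have key : ∀ i ≤ p, tval {p, q} i = tval ({p} : Set ℕ) i := by
    intro i hi
    apply le_antisymm
    · refine le_iInf₂ fun d hd => iInf₂_le d ?_
      simp only [Set.mem_singleton_iff] at hd
      simp [hd]
    · refine le_iInf₂ fun d hd => ?_
      rcases hd with hd | hd
      · exact iInf₂_le d (by simp [hd])
      · have h1 : i + (p - i) ∈ ({p} : Set ℕ) := by simp [Nat.add_sub_cancel' hi]
        have h2 : tval ({p} : Set ℕ) i ≤ ((p - i : ℕ) : ℝ) := by unfold tval; exact iInf_le_of_le (p - i) (iInf_le_of_le h1 le_rfl)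
        refine h2.trans ?_
        have : (p - i : ℕ) ≤ d := by
          simp only [Set.mem_singleton_iff] at hd
          omega
        exact_mod_cast this
  have hterm : ∀ i ∈ Finset.range (k + 1), tterm a {p, q} i = tterm a {p} i := by
    intro i hi
    simp only [Finset.mem_range] at hi
    unfold tterm
    rw [key i (by omega)]
  have htmin : tmin k a {p, q} = tmin k a ({p} : Set ℕ) := by
    unfold tmin
    exact iInf_congr fun i => iInf_congr fun hi => hterm i hi
  obtain ⟨i, hi, j, hj, hij, h1, h2⟩ := hsol
  have hsol' : IsSol k a ({p} : Set ℕ) :=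
    ⟨i, hi, j, hj, hij, by rw [← hterm i hi, ← htmin]; exact h1,
      by rw [← hterm j hj, ← htmin]; exact h2⟩
  have := hmin ({p} : Set ℕ) (by simp) ⟨p, rfl⟩ hsol'
  have hq : q ∈ ({p} : Set ℕ) := this ▸ (by simp : q ∈ ({p, q} : Set ℕ))
  simp only [Set.mem_singleton_iff] at hq
  omega
end

section
/- If {p, q_1} and {p, q_2} are both minimal tropical solutions of P = min_{0≤i≤k}{a_i + u^(i)} with p < k and q_1, q_2 ≥ k, then q_1 = q_2. -/
lemma tval_eq {S : Set ℕ} {i s : ℕ} (hs : s ∈ S) (his : i ≤ s)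
    (hmin : ∀ t ∈ S, i ≤ t → s ≤ t) : tval S i = (((s - i : ℕ) : ℝ) : EReal) := by
  refine le_antisymm (iInf₂_le (s - i) ?_) (le_iInf₂ fun d hd => ?_)
  · rwa [Nat.add_sub_cancel' his]
  · have h1 : s ≤ i + d := hmin _ hd (Nat.le_add_right _ _)
    exact EReal.coe_le_coe_iff.mpr (Nat.cast_le.mpr (by omega))

lemma tterm_eq {a : ℕ → ℤ} {S : Set ℕ} {i s : ℕ} (hs : s ∈ S) (his : i ≤ s)
    (hmin : ∀ t ∈ S, i ≤ t → s ≤ t) :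
    tterm a S i = (((a i + (s : ℤ) - i : ℤ) : ℝ) : EReal) := by
  rw [tterm, tval_eq hs his hmin, ← EReal.coe_add]
  rw [EReal.coe_eq_coe_iff]
  push_cast [his]
  ring

lemma tval_top {S : Set ℕ} {i : ℕ} (h : ∀ t ∈ S, t < i) : tval S i = ⊤ := by
  refine le_antisymm le_top (le_iInf₂ fun d hd => absurd (h _ hd) (by omega))

lemma tterm_top {a : ℕ → ℤ} {S : Set ℕ} {i : ℕ} (h : ∀ t ∈ S, t < i) :
    tterm a S i = ⊤ := by
  rw [tterm, tval_top h, EReal.coe_add_top]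

/-- key lemma: the big element of a minimal pair solution is determined. -/
lemma key (k : ℕ) (a : ℕ → ℤ) (p q : ℕ) (hp : p < k) (hq : k ≤ q)
    (h : IsMinSol k a {p, q}) :
    (q : ℤ) + (Finset.Ioc p k).inf' ⟨k, Finset.mem_Ioc.mpr ⟨hp, le_rfl⟩⟩ (fun i => a i - i)
      = (p : ℤ) + (Finset.range (p + 1)).inf' ⟨0, Finset.mem_range.mpr (Nat.succ_pos p)⟩
          (fun i => a i - i) := by
  set B : ℕ → ℤ := fun i => a i - i with hB
  set G : ℕ → ℤ := fun l => B l + (if l ≤ p then (p : ℤ) else q) with hG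
  obtain ⟨hne, hsol, hmin⟩ := h
  have hpq : p ≠ q := by omega
  -- {p} is not a solution
  have hnp : ¬ IsSol k a {p} := by
    intro hs
    have := hmin {p} (Set.singleton_subset_iff.mpr (Set.mem_insert _ _)) ⟨p, rfl⟩ hs
    have hqmem : q ∈ ({p} : Set ℕ) := this ▸ (by simp : q ∈ ({p, q} : Set ℕ))
    exact hpq (Set.mem_singleton_iff.mp hqmem).symm
  -- {q} is not a solution
  have hnq : ¬ IsSol k a {q} := by
    intro hs
    have := hmin {q} (Set.singleton_subset_iff.mpr (by simp)) ⟨q, rfl⟩ hs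
    have hpmem : p ∈ ({q} : Set ℕ) := this ▸ (by simp : p ∈ ({p, q} : Set ℕ))
    exact hpq (Set.mem_singleton_iff.mp hpmem)
  -- terms of the pair
  have hterm : ∀ l, l ≤ k → tterm a {p, q} l = ((G l : ℝ) : EReal) := by
    intro l hl
    by_cases hlp : l ≤ p
    · rw [tterm_eq (Set.mem_insert _ _) hlp ?_]
      · rw [EReal.coe_eq_coe_iff, Int.cast_inj]
        simp only [hG, hB, if_pos hlp]; ring
      · intro t ht hlt
        rcases ht with rfl | ht
        · exact le_rfl
        · rw [Set.mem_singleton_iff] at ht; omega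
    · rw [tterm_eq (show q ∈ ({p, q} : Set ℕ) by simp) (by omega) ?_]
      · rw [EReal.coe_eq_coe_iff, Int.cast_inj]
        simp only [hG, hB, if_neg hlp]; ring
      · intro t ht hlt
        rcases ht with rfl | ht
        · omega
        · rw [Set.mem_singleton_iff] at ht; omega
  -- minimum of the pair
  obtain ⟨i₀, hi₀, hi₀min⟩ :=
    Finset.exists_min_image (Finset.range (k + 1)) G ⟨0, Finset.mem_range.mpr (by omega)⟩
  have htmin : tmin k a {p, q} = ((G i₀ : ℝ) : EReal) := by
    refine le_antisymm ?_ (le_iInf₂ fun l hl => ?_)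
    · have h1 : tmin k a {p, q} ≤ tterm a {p, q} i₀ := iInf₂_le i₀ hi₀
      rwa [hterm i₀ (Finset.mem_range_succ_iff.mp hi₀)] at h1
    · rw [hterm l (Finset.mem_range_succ_iff.mp hl)]
      exact EReal.coe_le_coe_iff.mpr (Int.cast_le.mpr (hi₀min l hl))
  -- extract the two minimizers
  obtain ⟨i, hi, j, hj, hij, hti, htj⟩ := hsol
  rw [hterm i (Finset.mem_range_succ_iff.mp hi), htmin, EReal.coe_eq_coe_iff,
    Int.cast_inj] at hti
  rw [hterm j (Finset.mem_range_succ_iff.mp hj), htmin, EReal.coe_eq_coe_iff,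
    Int.cast_inj] at htj
  have hGmin : ∀ l, l ≤ k → G i ≤ G l := by
    intro l hl; rw [hti]; exact hi₀min l (Finset.mem_range_succ_iff.mpr hl)
  have hGij : G i = G j := hti.trans htj.symm
  replace hi := Finset.mem_range_succ_iff.mp hi
  replace hj := Finset.mem_range_succ_iff.mp hj
  clear hti htj htmin hi₀min hi₀
  -- minimizers of B on the two ranges
  obtain ⟨i₁, hi₁, hmin₁⟩ := Finset.exists_min_image (Finset.range (p + 1)) B
    ⟨0, Finset.mem_range.mpr (Nat.succ_pos p)⟩
  obtain ⟨i₂, hi₂, hmin₂⟩ := Finset.exists_min_image (Finset.Ioc p k) B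
    ⟨k, Finset.mem_Ioc.mpr ⟨hp, le_rfl⟩⟩
  have e₁ : (Finset.range (p + 1)).inf' ⟨0, Finset.mem_range.mpr (Nat.succ_pos p)⟩
      (fun i => a i - i) = B i₁ :=
    le_antisymm (Finset.inf'_le _ hi₁) (Finset.le_inf' _ _ hmin₁)
  have e₂ : (Finset.Ioc p k).inf' ⟨k, Finset.mem_Ioc.mpr ⟨hp, le_rfl⟩⟩
      (fun i => a i - i) = B i₂ :=
    le_antisymm (Finset.inf'_le _ hi₂) (Finset.le_inf' _ _ hmin₂)
  rw [e₁, e₂]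
  rw [Finset.mem_range_succ_iff] at hi₁
  rw [Finset.mem_Ioc] at hi₂
  -- helper: build a solution for {p} from two minimizers of B on [0,p]
  have mkSolP : ∀ u v, u ≤ p → v ≤ p → u ≠ v → B u = B v →
      (∀ l, l ≤ p → B u ≤ B l) → IsSol k a {p} := by
    intro u v hu hv huv hBuv hBmin
    have htermP : ∀ l, l ≤ p → tterm a ({p} : Set ℕ) l = (((B l + p : ℤ) : ℝ) : EReal) := by
      intro l hl
      rw [tterm_eq (Set.mem_singleton p) hl (fun t ht _ => by
        rw [Set.mem_singleton_iff] at ht; omega)]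
      rw [EReal.coe_eq_coe_iff, Int.cast_inj]; simp only [hB]; ring
    have htminP : tmin k a {p} = (((B u + p : ℤ) : ℝ) : EReal) := by
      refine le_antisymm ?_ (le_iInf₂ fun l hl => ?_)
      · have h1 : tmin k a {p} ≤ tterm a {p} u :=
          iInf₂_le u (Finset.mem_range_succ_iff.mpr (by omega))
        rwa [htermP u hu] at h1
      · by_cases hlp : l ≤ p
        · rw [htermP l hlp]
          exact EReal.coe_le_coe_iff.mpr (Int.cast_le.mpr (by have := hBmin l hlp; omega))
        · rw [tterm_top (fun t ht => by rw [Set.mem_singleton_iff] at ht; omega)]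
          exact le_top
    exact ⟨u, Finset.mem_range_succ_iff.mpr (by omega),
      v, Finset.mem_range_succ_iff.mpr (by omega), huv,
      by rw [htermP u hu, htminP],
      by rw [htermP v hv, htminP, EReal.coe_eq_coe_iff, Int.cast_inj]; omega⟩
  -- helper: build a solution for {q} from two minimizers of B on [0,k]
  have mkSolQ : ∀ u v, u ≤ k → v ≤ k → u ≠ v → B u = B v →
      (∀ l, l ≤ k → B u ≤ B l) → IsSol k a {q} := by
    intro u v hu hv huv hBuv hBmin
    have htermQ : ∀ l, l ≤ k → tterm a ({q} : Set ℕ) l = (((B l + q : ℤ) : ℝ) : EReal) := by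
      intro l hl
      rw [tterm_eq (Set.mem_singleton q) (by omega) (fun t ht _ => by
        rw [Set.mem_singleton_iff] at ht; omega)]
      rw [EReal.coe_eq_coe_iff, Int.cast_inj]; simp only [hB]; ring
    have htminQ : tmin k a {q} = (((B u + q : ℤ) : ℝ) : EReal) := by
      refine le_antisymm ?_ (le_iInf₂ fun l hl => ?_)
      · have h1 : tmin k a {q} ≤ tterm a {q} u :=
          iInf₂_le u (Finset.mem_range_succ_iff.mpr hu)
        rwa [htermQ u hu] at h1
      · rw [htermQ l (Finset.mem_range_succ_iff.mp hl)]
        exact EReal.coe_le_coe_iff.mpr (Int.cast_le.mpr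
          (by have := hBmin l (Finset.mem_range_succ_iff.mp hl); omega))
    exact ⟨u, Finset.mem_range_succ_iff.mpr hu,
      v, Finset.mem_range_succ_iff.mpr hv, huv,
      by rw [htermQ u hu, htminQ],
      by rw [htermQ v hv, htminQ, EReal.coe_eq_coe_iff, Int.cast_inj]; omega⟩
  -- key facts about G
  have hGle : ∀ l, l ≤ p → G l = B l + p := fun l hl => by
    simp only [hG, if_pos hl]
  have hGgt : ∀ l, p < l → G l = B l + q := fun l hl => by
    simp only [hG, if_neg (by omega : ¬ l ≤ p)]
  -- case analysis on positions of i and j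
  have main : ∀ u v, u ≤ k → v ≤ k → u ≠ v → G u = G v → (∀ l, l ≤ k → G u ≤ G l) →
      u ≤ p → p < v → (q : ℤ) + B i₂ = (p : ℤ) + B i₁ := by
    intro u v hu hv huv hGuv hGm hup hpv
    have h1 : B u = B i₁ := by
      have ha : G u ≤ G i₁ := hGm i₁ (by omega)
      rw [hGle u hup, hGle i₁ hi₁] at ha
      have hb := hmin₁ u (Finset.mem_range_succ_iff.mpr hup)
      omega
    have h2 : B v = B i₂ := by
      have ha : G u ≤ G i₂ := hGm i₂ (by omega)
      rw [hGuv, hGgt v hpv, hGgt i₂ hi₂.1] at ha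
      have hb := hmin₂ v (Finset.mem_Ioc.mpr ⟨hpv, hv⟩)
      omega
    rw [hGle u hup, hGgt v hpv] at hGuv
    omega
  by_cases hip : i ≤ p <;> by_cases hjp : j ≤ p
  · -- both small: {p} would be a solution
    refine absurd (mkSolP i j hip hjp hij ?_ (fun l hl => ?_)) hnp
    · have := hGij; rw [hGle i hip, hGle j hjp] at this; omega
    · have := hGmin l (by omega)
      rw [hGle i hip, hGle l hl] at this; omega
  · exact main i j hi hj hij hGij hGmin hip (by omega)
  · exact main j i hj hi hij.symm hGij.symm
      (fun l hl => hGij ▸ hGmin l hl) hjp (by omega)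
  · -- both large: {q} would be a solution
    refine absurd (mkSolQ i j hi hj hij ?_ ?_) hnq
    · have := hGij; rw [hGgt i (by omega), hGgt j (by omega)] at this; omega
    · intro l hl
      have hiq : B i < B i₁ := by
        have ha : G i ≤ G i₁ := hGmin i₁ (by omega)
        rw [hGgt i (by omega), hGle i₁ hi₁] at ha
        omega
      by_cases hlp : l ≤ p
      · have := hmin₁ l (Finset.mem_range_succ_iff.mpr hlp); omega
      · have := hGmin l hl
        rw [hGgt i (by omega), hGgt l (by omega)] at this; omega

/-- uniqueness of the large element of a minimal solution `{p, q}`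
with `p < k ≤ q`. -/
theorem stmt2 (k : ℕ) (hk : 1 ≤ k) (a : ℕ → ℤ) (p q₁ q₂ : ℕ)
    (hp : p < k) (hq₁ : k ≤ q₁) (hq₂ : k ≤ q₂)
    (h₁ : IsMinSol k a {p, q₁}) (h₂ : IsMinSol k a {p, q₂}) : q₁ = q₂ := by
  have e₁ := key k a p q₁ hp hq₁ h₁
  have e₂ := key k a p q₂ hp hq₂ h₂
  have : (q₁ : ℤ) = (q₂ : ℤ) := by omega
  exact_mod_cast this
end

section
/- A tropical linear differential equation P = min_{0≤i≤k}{a_i + u^(i)} has a singleton solution {s} with s ≥ k if and only if the minimum in min_{0≤i≤k}{a_i + k - i} is attained at least twice. -/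
lemma tval_singleton {s i : ℕ} (h : i ≤ s) :
    tval {s} i = (((s - i : ℕ) : ℝ) : EReal) := by
  unfold tval
  apply le_antisymm
  · exact iInf₂_le (s - i) (by simp [Nat.add_sub_cancel' h])
  · refine le_iInf₂ fun d hd => ?_
    simp only [Set.mem_singleton_iff] at hd
    have : d = s - i := by omega
    simp [this]

lemma tterm_singleton (a : ℕ → ℤ) {s i : ℕ} (h : i ≤ s) :
    tterm a {s} i = (((a i + ((s : ℤ) - i) : ℤ) : ℝ) : EReal) := by
  rw [tterm, tval_singleton h, ← EReal.coe_add]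
  congr 1
  push_cast [h]
  ring

lemma tterm_eq_tmin_iff (k : ℕ) (a : ℕ → ℤ) (s : ℕ) (hs : k ≤ s) (i : ℕ)
    (hi : i ∈ Finset.range (k + 1)) :
    tterm a {s} i = tmin k a {s} ↔
      ∀ l ∈ Finset.range (k + 1), a i + ((s : ℤ) - i) ≤ a l + ((s : ℤ) - l) := by
  have hle : ∀ j ∈ Finset.range (k + 1), j ≤ s := fun j hj => by
    simp only [Finset.mem_range] at hj; omega
  constructor
  · intro h l hl
    have h1 : tmin k a {s} ≤ tterm a {s} l := by
      rw [tmin]; exact iInf₂_le l hl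
    rw [← h, tterm_singleton a (hle i hi), tterm_singleton a (hle l hl)] at h1
    exact_mod_cast h1
  · intro h
    apply le_antisymm
    · rw [tmin]
      refine le_iInf₂ fun l hl => ?_
      rw [tterm_singleton a (hle i hi), tterm_singleton a (hle l hl)]
      exact_mod_cast h l hl
    · rw [tmin]; exact iInf₂_le i hi

/-- there is a singleton solution `{s}` with `s ≥ k` iff the minimum
in `min_{0 ≤ i ≤ k} {a_i + k - i}` is attained at least twice. -/
theorem stmt4 (k : ℕ) (hk : 1 ≤ k) (a : ℕ → ℤ) :
    (∃ s : ℕ, k ≤ s ∧ IsSol k a {s}) ↔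
      ∃ i ∈ Finset.range (k + 1), ∃ j ∈ Finset.range (k + 1), i ≠ j ∧
        a i + ((k : ℤ) - i) = a j + ((k : ℤ) - j) ∧
        ∀ l ∈ Finset.range (k + 1), a i + ((k : ℤ) - i) ≤ a l + ((k : ℤ) - l) := by
  constructor
  · rintro ⟨s, hs, i, hi, j, hj, hij, hti, htj⟩
    rw [tterm_eq_tmin_iff k a s hs i hi] at hti
    rw [tterm_eq_tmin_iff k a s hs j hj] at htj
    refine ⟨i, hi, j, hj, hij, ?_, ?_⟩
    · have h1 := hti j hj
      have h2 := htj i hi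
      omega
    · intro l hl
      have := hti l hl
      omega
  · rintro ⟨i, hi, j, hj, hij, heq, hmin⟩
    refine ⟨k, le_refl k, i, hi, j, hj, hij, ?_, ?_⟩
    · rw [tterm_eq_tmin_iff k a k (le_refl k) i hi]
      intro l hl
      have := hmin l hl
      omega
    · rw [tterm_eq_tmin_iff k a k (le_refl k) j hj]
      intro l hl
      have := hmin l hl
      omega
end

section
/- For any family of n ≥ 3 permutations w_1,...,w_n ∈ Sym(l), there exists an index j ∈ [n] such that the number of inversions of the family obtained by removing w_j is at most (2/n) times the number of (n−1)-element subsets of [l]; more precisely, each (n−1)-subset {i_1,...,i_{n−1}} of [l] is an inversion of the (n−1)-subfamily {w_1,...,w_n} \ {w_j} for exactly zero or exactly two indices j ∈ [n]. -/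
/-- `m_w(s) = w⁻¹(min w(s))`, as an element of `WithTop (Fin l)` (`⊤` when `s`
is empty). -/
def mW {l : ℕ} (w : Equiv.Perm (Fin l)) (s : Finset (Fin l)) : WithTop (Fin l) :=
  WithTop.map (⇑w.symm) ((s.image ⇑w).min)

/-- `s` is an inversion of the subfamily of `w` obtained by removing index `j`:
the values `m_{w_t}(s)`, `t ≠ j`, are pairwise distinct. -/
def InvWithout {l n : ℕ} (w : Fin n → Equiv.Perm (Fin l)) (j : Fin n)
    (s : Finset (Fin l)) : Prop :=
  Function.Injective (fun t : {t : Fin n // t ≠ j} => mW (w t) s)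

open Finset

lemma mW_mem {l : ℕ} (w : Equiv.Perm (Fin l)) {s : Finset (Fin l)} (hs : s.Nonempty) :
    ∃ x ∈ s, mW w s = (x : WithTop (Fin l)) := by
  have him : (s.image ⇑w).Nonempty := hs.image _
  obtain ⟨x, hx, hw⟩ := mem_image.1 (min'_mem _ him)
  refine ⟨x, hx, ?_⟩
  rw [mW, ← coe_min' him, WithTop.map_coe, ← hw, Equiv.symm_apply_apply]

lemma invWithout_iff {l n : ℕ} (w : Fin n → Equiv.Perm (Fin l)) (j : Fin n)
    (s : Finset (Fin l)) :
    InvWithout w j s ↔ ∀ t1 t2 : Fin n, t1 ≠ j → t2 ≠ j →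
      mW (w t1) s = mW (w t2) s → t1 = t2 := by
  constructor
  · intro h t1 t2 h1 h2 he
    exact congrArg Subtype.val (h (a₁ := ⟨t1, h1⟩) (a₂ := ⟨t2, h2⟩) he)
  · intro h t1 t2 he
    exact Subtype.ext (h t1 t2 t1.2 t2.2 he)

lemma count_key {l n : ℕ} (hn : 3 ≤ n) (w : Fin n → Equiv.Perm (Fin l))
    {s : Finset (Fin l)} (hs : s.card = n - 1) {j₀ : Fin n} (hj₀ : InvWithout w j₀ s) :
    ∃ a : Fin n, a ≠ j₀ ∧ {j : Fin n | InvWithout w j s} = {j₀, a} := by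
  classical
  have hsne : s.Nonempty := by
    rw [← card_pos, hs]; omega
  set f : Fin n → WithTop (Fin l) := fun t => mW (w t) s with hf
  have hinj := (invWithout_iff w j₀ s).1 hj₀
  set T : Finset (Fin n) := univ.erase j₀ with hT
  have hTcard : T.card = n - 1 := by
    rw [hT, card_erase_of_mem (mem_univ _), card_univ, Fintype.card_fin]
  have hsub : T.image f ⊆ s.image (fun x : Fin l => (x : WithTop (Fin l))) := by
    intro y hy
    obtain ⟨t, _, rfl⟩ := mem_image.1 hy
    obtain ⟨x, hx, hxe⟩ := mW_mem (w t) hsne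
    exact mem_image.2 ⟨x, hx, hxe.symm⟩
  have hscard : (s.image (fun x : Fin l => (x : WithTop (Fin l)))).card = n - 1 := by
    rw [card_image_of_injective _ WithTop.coe_injective, hs]
  have hTicard : (T.image f).card = T.card := by
    apply card_image_of_injOn
    intro t1 h1 t2 h2 he
    exact hinj t1 t2 (mem_erase.1 h1).1 (mem_erase.1 h2).1 he
  have heq : T.image f = s.image (fun x : Fin l => (x : WithTop (Fin l))) :=
    eq_of_subset_of_card_le hsub (by rw [hscard, hTicard, hTcard])
  have hj₀mem : f j₀ ∈ T.image f := by
    rw [heq]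
    obtain ⟨x, hx, hxe⟩ := mW_mem (w j₀) hsne
    exact mem_image.2 ⟨x, hx, hxe.symm⟩
  obtain ⟨a, haT, hafj⟩ := mem_image.1 hj₀mem
  have haj₀ : a ≠ j₀ := (mem_erase.1 haT).1
  refine ⟨a, haj₀, ?_⟩
  ext j
  simp only [Set.mem_setOf_eq, Set.mem_insert_iff, Set.mem_singleton_iff]
  constructor
  · intro hj
    by_contra hcon
    push_neg at hcon
    obtain ⟨hjj₀, hja⟩ := hcon
    exact haj₀ ((invWithout_iff w j s).1 hj a j₀ (Ne.symm hja) (Ne.symm hjj₀) hafj)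
  · rintro (h | h)
    · rw [h]; exact hj₀
    · rw [h, invWithout_iff]
      intro t1 t2 h1 h2 he
      by_cases e1 : t1 = j₀ <;> by_cases e2 : t2 = j₀
      · rw [e1, e2]
      · subst e1
        exact absurd (hinj t2 a e2 haj₀ (he.symm.trans hafj.symm)) h2
      · subst e2
        exact absurd (hinj t1 a e1 haj₀ (he.trans hafj.symm)) h1
      · exact hinj t1 t2 e1 e2 he

/-- for `n ≥ 3` permutations `w₁,…,wₙ` of `[l]`, some subfamily of
size `n-1` has at most `(2/n)·C(l, n-1)` inversions; more precisely, each
`(n-1)`-subset of `[l]` is an inversion of exactly zero or exactly two of the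
`n` subfamilies of size `n-1`. -/
theorem stmt18 (l n : ℕ) (hn : 3 ≤ n) (w : Fin n → Equiv.Perm (Fin l)) :
    (∃ j : Fin n,
      n * {s : Finset (Fin l) | s.card = n - 1 ∧ InvWithout w j s}.ncard
        ≤ 2 * Nat.choose l (n - 1)) ∧
    ∀ s : Finset (Fin l), s.card = n - 1 →
      {j : Fin n | InvWithout w j s}.ncard = 0 ∨
      {j : Fin n | InvWithout w j s}.ncard = 2 := by
  classical
  have part2 : ∀ s : Finset (Fin l), s.card = n - 1 →
      {j : Fin n | InvWithout w j s}.ncard = 0 ∨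
      {j : Fin n | InvWithout w j s}.ncard = 2 := by
    intro s hs
    by_cases hex : ∃ j₀, InvWithout w j₀ s
    · obtain ⟨j₀, hj₀⟩ := hex
      obtain ⟨a, ha, hset⟩ := count_key hn w hs hj₀
      right
      rw [hset]
      exact Set.ncard_pair (Ne.symm ha)
    · left
      push_neg at hex
      have : {j : Fin n | InvWithout w j s} = ∅ := by
        ext j; simpa using hex j
      simp [this]
  refine ⟨?_, part2⟩
  -- counting part
  set c : Fin n → ℕ :=
    fun j => (univ.filter (fun s : Finset (Fin l) => s.card = n - 1 ∧ InvWithout w j s)).card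
    with hc
  have hncard : ∀ j : Fin n,
      {s : Finset (Fin l) | s.card = n - 1 ∧ InvWithout w j s}.ncard = c j := by
    intro j
    show _ = (univ.filter (fun s : Finset (Fin l) => s.card = n - 1 ∧ InvWithout w j s)).card
    rw [← Set.ncard_coe_finset]
    congr 1
    ext s
    simp
  have hjcard : ∀ s : Finset (Fin l),
      (univ.filter (fun j : Fin n => InvWithout w j s)).card
        = {j : Fin n | InvWithout w j s}.ncard := by
    intro s
    rw [← Set.ncard_coe_finset]
    congr 1
    ext j
    simp
  have hsum : ∑ j : Fin n, c j ≤ 2 * Nat.choose l (n - 1) := by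
    have h1 : ∑ j : Fin n, c j
        = ∑ s ∈ (univ : Finset (Finset (Fin l))),
            ∑ j : Fin n, (if s.card = n - 1 ∧ InvWithout w j s then 1 else 0) := by
      rw [hc]
      simp only [card_filter]
      exact Finset.sum_comm
    rw [h1]
    have h2 : ∀ s ∈ (univ : Finset (Finset (Fin l))),
        (∑ j : Fin n, (if s.card = n - 1 ∧ InvWithout w j s then 1 else 0))
          ≤ if s.card = n - 1 then 2 else 0 := by
      intro s _
      by_cases hcard : s.card = n - 1
      · simp only [hcard, if_pos, true_and]
        have : (∑ j : Fin n, if InvWithout w j s then 1 else 0)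
            = (univ.filter (fun j : Fin n => InvWithout w j s)).card := by
          rw [card_filter]
        rw [this, hjcard s]
        rcases part2 s hcard with h | h <;> omega
      · simp [hcard]
    calc ∑ s ∈ (univ : Finset (Finset (Fin l))),
            ∑ j : Fin n, (if s.card = n - 1 ∧ InvWithout w j s then 1 else 0)
        ≤ ∑ s ∈ (univ : Finset (Finset (Fin l))), (if s.card = n - 1 then 2 else 0) :=
          Finset.sum_le_sum h2
      _ = 2 * (univ.filter (fun s : Finset (Fin l) => s.card = n - 1)).card := by
          rw [← Finset.sum_filter, Finset.sum_const, smul_eq_mul, mul_comm]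
      _ = 2 * Nat.choose l (n - 1) := by
          congr 1
          have : (univ : Finset (Finset (Fin l))).filter (fun s => s.card = n - 1)
              = Finset.powersetCard (n - 1) univ := by
            ext s
            simp [Finset.mem_powersetCard]
          rw [this, Finset.card_powersetCard, card_univ, Fintype.card_fin]
  obtain ⟨j, -, hjmin⟩ := Finset.exists_min_image (univ : Finset (Fin n)) c
    ⟨⟨0, by omega⟩, mem_univ _⟩
  refine ⟨j, ?_⟩
  rw [hncard j]
  calc n * c j = ∑ _t : Fin n, c j := by
        rw [Finset.sum_const, card_univ, Fintype.card_fin, smul_eq_mul]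
    _ ≤ ∑ t : Fin n, c t := Finset.sum_le_sum (fun t ht => hjmin t ht)
    _ ≤ 2 * Nat.choose l (n - 1) := hsum
end
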